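/- Suppose A, B, k_4 are positive reals. Then there exists K > 0 such that for every k_8 > K there exists κ > 0 such that for every K_M1 ∈ (0, κ), the function g(y) = k_8(A − y)y − B k_4 y/(K_M1 + y) has exactly three zeros 0 = y_0 < y_1 < y_2 in the interval [0, A), and g'(y_0) < 0, g'(y_1) > 0, g'(y_2) < 0; that is, the ODE y' = g(y) has three hyperbolic steady states in [0, A), of which the boundary steady state 0 and the largest steady state are asymptotically stable and the middle one is unstable. -/

import Mathlib

set_option maxHeartbeats 1600000 in
/-- Limiting case `k₁ = 0` of the Doherty model: for every sufficiently large `k₈` and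
sufficiently small `K_M1 > 0`, the function
`g(y) = k₈ (A − y) y − B k₄ y / (K_M1 + y)`
has exactly three zeros `0 = y₀ < y₁ < y₂` in `[0, A)`, with `g'(y₀) < 0`, `g'(y₁) > 0`,
`g'(y₂) < 0`; i.e. the ODE `y' = g(y)` has three hyperbolic steady states in `[0, A)`,
the boundary state `0` and the largest one asymptotically stable, the middle one
unstable. -/
theorem lisman_bistability
    (A B k4 : ℝ) (hA : 0 < A) (hB : 0 < B) (hk4 : 0 < k4) :
    ∃ K > (0 : ℝ), ∀ k8 : ℝ, k8 > K →
      ∃ κ > (0 : ℝ), ∀ KM1 : ℝ, KM1 ∈ Set.Ioo (0 : ℝ) κ →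
        ∃ y1 y2 : ℝ,
          (fun g : ℝ → ℝ =>
            0 < y1 ∧ y1 < y2 ∧ y2 < A ∧
            (∀ y ∈ Set.Ico (0 : ℝ) A, (g y = 0 ↔ (y = 0 ∨ y = y1 ∨ y = y2))) ∧
            deriv g 0 < 0 ∧ deriv g y1 > 0 ∧ deriv g y2 < 0)
          (fun y => k8 * (A - y) * y - B * k4 * y / (KM1 + y)) := by
  refine ⟨4*B*k4/A^2, by positivity, ?_⟩
  intro k8 hk8
  have hk8pos : 0 < k8 := lt_trans (by positivity) hk8
  refine ⟨B*k4/(k8*A), by positivity, ?_⟩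
  intro KM1 hKM
  obtain ⟨hKM0, hKMκ⟩ := hKM
  have hAk : 4*B*k4 < k8*A^2 := by
    rw [gt_iff_lt, div_lt_iff₀ (by positivity)] at hk8; linarith
  have hKMB : KM1 * (k8*A) < B*k4 := by
    rw [lt_div_iff₀ (by positivity)] at hKMκ; linarith
  have hKMA : KM1 < A := by
    nlinarith [hKMB, hAk, mul_pos hk8pos hA, hB.le, hk4.le, hKM0]
  have hDpos : 0 < (A+KM1)^2 - 4*B*k4/k8 := by
    rw [sub_pos, div_lt_iff₀ hk8pos]
    nlinarith [hAk, mul_pos hk8pos (mul_pos hA hKM0), mul_pos hk8pos (mul_pos hKM0 hKM0)]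
  obtain ⟨s, hspos, hs2'⟩ : ∃ s : ℝ, 0 < s ∧ k8 * s^2 = k8*(A+KM1)^2 - 4*B*k4 := by
    refine ⟨Real.sqrt ((A+KM1)^2 - 4*B*k4/k8), Real.sqrt_pos.mpr hDpos, ?_⟩
    rw [Real.sq_sqrt hDpos.le]; field_simp
  obtain ⟨y1, hy1def⟩ : ∃ y1 : ℝ, y1 = ((A-KM1) - s)/2 := ⟨_, rfl⟩
  obtain ⟨y2, hy2def⟩ : ∃ y2 : ℝ, y2 = ((A-KM1) + s)/2 := ⟨_, rfl⟩
  have hsA : s < A - KM1 := by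
    by_contra h
    push_neg at h
    have h1 : (A - KM1)^2 ≤ s^2 := by
      have h0 : (0:ℝ) ≤ A - KM1 := by linarith
      nlinarith
    have h2 : k8*(A-KM1)^2 ≤ k8*s^2 := by nlinarith
    nlinarith [hs2', hKMB, hk8pos, hA, hKM0]
  have hy1pos : 0 < y1 := by rw [hy1def]; linarith
  have hy12 : y1 < y2 := by rw [hy1def, hy2def]; linarith
  have hsA2 : s < A + KM1 := by
    by_contra h
    push_neg at h
    have h1 : (A + KM1)^2 ≤ s^2 := by
      have h0 : (0:ℝ) ≤ A + KM1 := by linarith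
      nlinarith
    have h2 : k8*(A+KM1)^2 ≤ k8*s^2 := by nlinarith
    linarith [hs2', mul_pos hB hk4]
  have hy2A : y2 < A := by rw [hy2def]; linarith
  have hfact : ∀ y : ℝ, k8*(A-y)*(KM1+y) - B*k4 = -(k8*(y-y1)*(y-y2)) := by
    intro y
    rw [hy1def, hy2def]
    linear_combination (-(1:ℝ)/4) * hs2'
  have hq1 : k8*(A-y1)*(KM1+y1) = B*k4 := by
    have h := hfact y1
    have h0 : k8*(y1-y1)*(y1-y2) = 0 := by ring
    linarith
  have hq2 : k8*(A-y2)*(KM1+y2) = B*k4 := by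
    have h := hfact y2
    have h0 : k8*(y2-y2)*(y2-y1) = 0 := by ring
    have h0' : k8*(y2-y1)*(y2-y2) = 0 := by ring
    linarith
  have hderiv : ∀ y : ℝ, 0 < KM1 + y →
      deriv (fun y => k8 * (A - y) * y - B * k4 * y / (KM1 + y)) y
        = k8*(A-2*y) - B*k4*KM1/(KM1+y)^2 := by
    intro y hy
    have hfun : (fun y : ℝ => k8 * (A - y) * y - B * k4 * y / (KM1 + y))
        = fun y : ℝ => k8 * ((A - y) * y) - B * k4 * y / (KM1 + y) := by
      funext z; ring
    rw [hfun]
    have h1 : HasDerivAt (fun z : ℝ => k8 * ((A - z) * z)) (k8*(A-2*y)) y := by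
      have h0 := (((hasDerivAt_id y).const_sub A).mul (hasDerivAt_id y)).const_mul k8
      simp only [id_eq] at h0
      have he : k8 * (-1 * y + (A - y) * 1) = k8*(A-2*y) := by ring
      rwa [he] at h0
    have hnum : HasDerivAt (fun z : ℝ => B * k4 * z) (B*k4) y := by
      simpa using (hasDerivAt_id y).const_mul (B*k4)
    have hden : HasDerivAt (fun z : ℝ => KM1 + z) 1 y := by
      simpa using (hasDerivAt_id y).const_add KM1
    have h2 : HasDerivAt (fun z : ℝ => B * k4 * z / (KM1 + z)) (B*k4*KM1/(KM1+y)^2) y := by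
      have h := hnum.div hden hy.ne'
      refine h.congr_deriv ?_
      ring
    exact (h1.sub h2).deriv
  refine ⟨y1, y2, hy1pos, hy12, hy2A, ?_, ?_, ?_, ?_⟩
  · -- zeros
    intro y hy
    have hKy : 0 < KM1 + y := by
      obtain ⟨hy0, _⟩ := hy
      linarith
    constructor
    · intro hg
      rw [sub_eq_zero, eq_div_iff hKy.ne'] at hg
      have h2 : k8 * (y * (y - y1) * (y - y2)) = 0 := by
        linear_combination y * (hfact y) - hg
      have h3 := (mul_eq_zero.mp h2).resolve_left hk8pos.ne'
      rcases mul_eq_zero.mp h3 with h4 | h4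
      · rcases mul_eq_zero.mp h4 with h5 | h5
        · exact Or.inl h5
        · exact Or.inr (Or.inl (sub_eq_zero.mp h5))
      · exact Or.inr (Or.inr (sub_eq_zero.mp h4))
    · rintro (rfl | h | h)
      · simp
      · rw [h, sub_eq_zero, eq_div_iff (show KM1 + y1 ≠ 0 by linarith)]
        linear_combination y1 * hq1
      · rw [h, sub_eq_zero, eq_div_iff (show KM1 + y2 ≠ 0 from (by linarith : (0:ℝ) < KM1 + y2).ne')]
        linear_combination y2 * hq2
  · -- deriv at 0
    rw [hderiv 0 (by linarith)]
    have hd : (0:ℝ) < (KM1 + 0)^2 := by positivity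
    rw [sub_neg, lt_div_iff₀ hd]
    nlinarith [mul_lt_mul_of_pos_right hKMB hKM0]
  · -- deriv at y1
    rw [gt_iff_lt, hderiv y1 (by linarith)]
    have hd : (0:ℝ) < (KM1 + y1)^2 := by positivity
    rw [sub_pos, div_lt_iff₀ hd]
    have hs1 : s = A - KM1 - 2*y1 := by rw [hy1def]; ring
    have hid : k8*(A-2*y1)*(KM1+y1)^2 - B*k4*KM1 = k8*(KM1+y1)*y1*s := by
      linear_combination KM1 * hq1 - (k8*(KM1+y1)*y1) * hs1
    have hpos : 0 < k8*(KM1+y1)*y1*s :=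
      mul_pos (mul_pos (mul_pos hk8pos (by linarith)) hy1pos) hspos
    linarith
  · -- deriv at y2
    rw [hderiv y2 (by linarith)]
    have hy2pos : 0 < y2 := lt_trans hy1pos hy12
    have hd : (0:ℝ) < (KM1 + y2)^2 := by positivity
    rw [sub_neg, lt_div_iff₀ hd]
    have hs1 : s = 2*y2 - (A - KM1) := by rw [hy2def]; ring
    have hid : B*k4*KM1 - k8*(A-2*y2)*(KM1+y2)^2 = k8*(KM1+y2)*y2*s := by
      linear_combination (-KM1) * hq2 - (k8*(KM1+y2)*y2) * hs1
    have hpos : 0 < k8*(KM1+y2)*y2*s :=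
      mul_pos (mul_pos (mul_pos hk8pos (by linarith)) hy2pos) hspos
    linarith
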